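/- arXiv:0908.3185 — 3 statements merged into one kernel-verified Lean document; each statement's English description precedes it below -/
import Mathlib

section
/- Let C be a submodule of (Z/2kZ)^n that is self-dual with respect to the standard inner product (i.e., C equals its dual C^perp = {x : x·y = 0 for all y in C}). Then for every codeword c in C, the sum of the squares of the signed representatives rho(c_i) is divisible by 2k. -/
/-- The signed representative map `ρ : ℤ/2kℤ → ℤ`. -/
def signedRep (k : ℕ) (a : ZMod (2 * k)) : ℤ :=
  if a.val ≤ k then (a.val : ℤ) else (a.val : ℤ) - 2 * k

theorem euclidean_weight_of_selfdual_div_2k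
    (k n : ℕ) (hk : 0 < k)
    (C : Submodule (ZMod (2 * k)) (Fin n → ZMod (2 * k)))
    (hself : ∀ x : Fin n → ZMod (2 * k),
      x ∈ C ↔ ∀ y ∈ C, ∑ i, x i * y i = 0) :
    ∀ c ∈ C, (2 * (k : ℤ)) ∣ ∑ i, (signedRep k (c i)) ^ 2 := by
  intro c hc
  haveI : NeZero (2 * k) := ⟨by omega⟩
  have hcast : ∀ a : ZMod (2 * k), ((signedRep k a : ℤ) : ZMod (2 * k)) = a := by
    intro a
    unfold signedRep
    split <;> push_cast <;> simp [ZMod.natCast_val, ZMod.cast_id, ZMod.natCast_self]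
    · rw [show ((2:ZMod (2*k)) * k) = ((2*k : ℕ) : ZMod (2*k)) by push_cast; ring, ZMod.natCast_self]
  have h0 : ∑ i, c i * c i = 0 := (hself c).mp hc c hc
  have h1 : ((∑ i, (signedRep k (c i)) ^ 2 : ℤ) : ZMod (2 * k)) = 0 := by
    push_cast
    simp only [hcast]
    simpa [sq] using h0
  have h2 := (ZMod.intCast_zmod_eq_zero_iff_dvd _ (2 * k)).mp h1
  have : ((2 * k : ℕ) : ℤ) = 2 * (k : ℤ) := by push_cast; ring
  rwa [this] at h2
end

section
/- Let C be a self-dual Z/2kZ-code of length n and let A_{2k}(C) = (1/sqrt(2k)) (rho(C) + 2k Z^n) be the Construction A lattice, viewed as the set of vectors v in R^n such that sqrt(2k)·v has integer entries congruent modulo 2k to some codeword of C (under rho). Then A_{2k}(C) is unimodular: it equals its dual lattice with respect to the standard inner product. -/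
/-- The Construction A lattice `A_{2k}(C) = (1/√(2k))(ρ(C) + 2kℤⁿ)`. -/
def constructionA (k n : ℕ) (C : Submodule (ZMod (2 * k)) (Fin n → ZMod (2 * k))) :
    Set (Fin n → ℝ) :=
  {v | ∃ c ∈ C, ∃ z : Fin n → ℤ,
    v = fun i => ((signedRep k (c i) : ℝ) + 2 * k * z i) / Real.sqrt (2 * k)}

/-- The dual lattice of a subset of `ℝⁿ` (with the standard inner product). -/
def dualLattice (n : ℕ) (L : Set (Fin n → ℝ)) : Set (Fin n → ℝ) :=
  {x | ∀ y ∈ L, ∃ m : ℤ, ∑ i, x i * y i = m}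

lemma two_k_zero (k : ℕ) : (2 : ZMod (2*k)) * (k : ℕ) = 0 := by
  have h := ZMod.natCast_self (2*k)
  push_cast at h
  exact h

lemma signedRep_cast (k : ℕ) [NeZero (2*k)] (a : ZMod (2*k)) :
    ((signedRep k a : ℤ) : ZMod (2*k)) = a := by
  unfold signedRep
  split
  · push_cast; simp [ZMod.natCast_val, ZMod.cast_id]
  · push_cast
    simp [ZMod.natCast_val, ZMod.cast_id, two_k_zero]

theorem constructionA_unimodular
    (k n : ℕ) (hk : 0 < k)
    (C : Submodule (ZMod (2 * k)) (Fin n → ZMod (2 * k)))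
    (hself : ∀ x : Fin n → ZMod (2 * k),
      x ∈ C ↔ ∀ y ∈ C, ∑ i, x i * y i = 0) :
    constructionA k n C = dualLattice n (constructionA k n C) := by
  haveI : NeZero (2*k) := ⟨by omega⟩
  have h2k : (0:ℝ) < 2*k := by positivity
  set s := Real.sqrt (2*(k:ℝ)) with hs_def
  have hss : s * s = 2*k := Real.mul_self_sqrt (le_of_lt h2k)
  have hspos : 0 < s := Real.sqrt_pos.mpr h2k
  have hsne : s ≠ 0 := ne_of_gt hspos
  ext x
  constructor
  · rintro ⟨c, hc, z, rfl⟩ y ⟨d, hd, w, rfl⟩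
    set A : Fin n → ℤ := fun i => signedRep k (c i) + 2*k*z i with hA
    set B : Fin n → ℤ := fun i => signedRep k (d i) + 2*k*w i with hB
    have hdvd : (2*k:ℤ) ∣ ∑ i, A i * B i := by
      have h0 : ((∑ i, A i * B i : ℤ) : ZMod (2*k)) = 0 := by
        push_cast [hA, hB]
        simp only [signedRep_cast, two_k_zero, zero_mul, mul_zero, add_zero, zero_add]
        exact (hself c).mp hc d hd
      exact_mod_cast (ZMod.intCast_zmod_eq_zero_iff_dvd _ _).mp h0
    obtain ⟨m, hm⟩ := hdvd
    refine ⟨m, ?_⟩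
    have key : ∀ i, ((signedRep k (c i):ℝ) + 2*k*z i)/s * (((signedRep k (d i):ℝ) + 2*k*w i)/s)
        = ((A i * B i : ℤ):ℝ)/(2*k) := by
      intro i
      rw [div_mul_div_comm, hss, hA, hB]
      push_cast
      ring
    simp only [← hs_def, key]
    rw [← Finset.sum_div]
    have hmR : (∑ i, ((A i * B i : ℤ):ℝ)) = 2*k*m := by
      rw [← Int.cast_sum, hm]
      push_cast
      ring
    rw [hmR]
    field_simp
  · intro hx
    -- Step 1: the coordinates of √(2k)·x are integers
    have hx1 : ∀ i : Fin n, ∃ m : ℤ, x i * s = m := by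
      intro i
      have hmem : (fun j => if j = i then s else 0) ∈ constructionA k n C := by
        refine ⟨0, C.zero_mem, Pi.single i 1, ?_⟩
        funext j
        have hrep0 : signedRep k ((0 : Fin n → ZMod (2*k)) j) = 0 := by
          simp [signedRep]
        rw [hrep0]
        by_cases hji : j = i
        · subst hji
          simp only [if_pos rfl, Pi.single_eq_same]
          rw [show ((0:ℤ):ℝ) + 2*(k:ℝ)*((1:ℤ):ℝ) = s * s by rw [hss]; push_cast; ring]
          rw [hs_def, mul_div_assoc]
          rw [div_self hsne, mul_one]
          simp
        · simp [hji, Pi.single_eq_of_ne hji]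
      obtain ⟨m, hm⟩ := hx _ hmem
      refine ⟨m, ?_⟩
      rw [← hm]
      rw [Finset.sum_eq_single i (fun j _ hji => by simp [hji]) (fun h => absurd (Finset.mem_univ i) h)]
      simp
    choose a ha using hx1
    have hxi : ∀ i, x i = (a i)/s := by
      intro i
      rw [eq_div_iff hsne]
      exact ha i
    -- Step 2: the reduction mod 2k is in C
    set c : Fin n → ZMod (2*k) := fun i => ((a i : ℤ) : ZMod (2*k)) with hc_def
    have hcC : c ∈ C := by
      rw [hself]
      intro y hy
      have hmem : (fun j => ((signedRep k (y j) : ℤ):ℝ)/s) ∈ constructionA k n C := by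
        refine ⟨y, hy, 0, ?_⟩
        funext j
        simp [hs_def]
      obtain ⟨m, hm⟩ := hx _ hmem
      have hZ : ∑ j, a j * signedRep k (y j) = 2*k*m := by
        have hR : ((∑ j, a j * signedRep k (y j) : ℤ):ℝ) = 2*k*m := by
          push_cast
          have h2 : ∀ j : Fin n, (a j : ℝ) * (signedRep k (y j) : ℝ)
              = x j * (((signedRep k (y j) : ℤ):ℝ)/s) * (2*(k:ℝ)) := by
            intro j
            rw [hxi j, ← hss]
            field_simp
          rw [Finset.sum_congr rfl (fun j _ => h2 j), ← Finset.sum_mul, hm]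
          ring
        exact_mod_cast hR
      have h0 : ((∑ j, a j * signedRep k (y j) : ℤ) : ZMod (2*k)) = 0 := by
        rw [hZ]
        push_cast
        rw [two_k_zero]
        ring
      push_cast at h0
      simpa [hc_def, signedRep_cast] using h0
    -- Step 3: assemble
    refine ⟨c, hcC, fun i => (a i - signedRep k (c i))/(2*k), ?_⟩
    funext i
    have hdvd : (2*k:ℤ) ∣ a i - signedRep k (c i) := by
      have h0 : ((a i - signedRep k (c i) : ℤ) : ZMod (2*k)) = 0 := by
        push_cast [signedRep_cast]
        simp [hc_def]
      exact_mod_cast (ZMod.intCast_zmod_eq_zero_iff_dvd _ _).mp h0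
    have hAi : (signedRep k (c i) : ℤ) + 2*k*((a i - signedRep k (c i))/(2*k)) = a i := by
      rw [Int.mul_ediv_cancel' hdvd]; ring
    rw [hxi i, hs_def]
    congr 1
    have hcast := congrArg (fun t : ℤ => (t : ℝ)) hAi
    push_cast at hcast
    linarith [hcast]
end

section
/- Let C be a self-dual Z/2kZ-code of length n such that every codeword has Euclidean weight divisible by 4k (i.e., C is Type II). Then every vector of the Construction A lattice A_{2k}(C) has even norm; that is, A_{2k}(C) is an even lattice. -/
lemma signedRep_sq (k : ℕ) (hk : 0 < k) (a : ZMod (2 * k)) :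
    signedRep k a ^ 2 = min (((a.val : ℤ)) ^ 2) ((2 * (k : ℤ) - (a.val : ℤ)) ^ 2) := by
  have : NeZero (2 * k) := ⟨by omega⟩
  have hlt : a.val < 2 * k := ZMod.val_lt a
  have hpos : (0 : ℤ) ≤ (a.val : ℤ) := Int.ofNat_nonneg _
  unfold signedRep
  split_ifs with h
  · have h' : (a.val : ℤ) ≤ k := by exact_mod_cast h
    rw [min_eq_left]; nlinarith
  · have h' : (k : ℤ) < (a.val : ℤ) := by exact_mod_cast Nat.lt_of_not_le h
    have hlt' : (a.val : ℤ) < 2 * k := by exact_mod_cast hlt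
    rw [min_eq_right]
    · ring
    · nlinarith

theorem constructionA_even_of_typeII
    (k n : ℕ) (hk : 0 < k)
    (C : Submodule (ZMod (2 * k)) (Fin n → ZMod (2 * k)))
    (hself : ∀ x : Fin n → ZMod (2 * k),
      x ∈ C ↔ ∀ y ∈ C, ∑ i, x i * y i = 0)
    (htypeII : ∀ c ∈ C, (4 * (k : ℤ)) ∣
      ∑ i, min (((c i).val : ℤ) ^ 2) ((2 * (k : ℤ) - (c i).val) ^ 2)) :
    ∀ v ∈ constructionA k n C, ∃ m : ℤ, ∑ i, v i * v i = 2 * m := by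
  rintro v ⟨c, hc, z, rfl⟩
  set a : Fin n → ℤ := fun i => signedRep k (c i) + 2 * k * z i with ha
  obtain ⟨M, hM⟩ := htypeII c hc
  have hdvd : ∑ i, a i ^ 2 = 4 * (k : ℤ) * (M + ∑ i, (z i * signedRep k (c i) + k * z i ^ 2)) := by
    have h2 : ∀ i : Fin n, a i ^ 2 =
        min (((c i).val : ℤ) ^ 2) ((2 * (k : ℤ) - (c i).val) ^ 2)
          + 4 * k * (z i * signedRep k (c i) + k * z i ^ 2) := by
      intro i; rw [← signedRep_sq k hk]; simp only [ha]; ring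
    simp only [h2]
    rw [Finset.sum_add_distrib, hM, ← Finset.mul_sum]; ring
  set N : ℤ := M + ∑ i, (z i * signedRep k (c i) + k * z i ^ 2)
  refine ⟨N, ?_⟩
  have hk2 : (0:ℝ) < 2 * k := by positivity
  have hsq : Real.sqrt (2 * k) * Real.sqrt (2 * k) = 2 * k :=
    Real.mul_self_sqrt hk2.le
  have hterm : ∀ i : Fin n,
      (((signedRep k (c i) : ℝ)) + 2 * k * z i) / Real.sqrt (2 * k) *
        ((((signedRep k (c i) : ℝ)) + 2 * k * z i) / Real.sqrt (2 * k))
      = ((a i : ℤ) : ℝ) ^ 2 / (2 * k) := by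
    intro i
    rw [div_mul_div_comm, hsq]
    push_cast [ha]
    ring
  calc ∑ i, (((signedRep k (c i) : ℝ)) + 2 * k * z i) / Real.sqrt (2 * k) *
        ((((signedRep k (c i) : ℝ)) + 2 * k * z i) / Real.sqrt (2 * k))
      = ∑ i, ((a i : ℤ) : ℝ) ^ 2 / (2 * k) := Finset.sum_congr rfl (fun i _ => hterm i)
    _ = (((∑ i, a i ^ 2 : ℤ) : ℝ)) / (2 * k) := by
        rw [← Finset.sum_div]
        congr 1
        rw [Int.cast_sum]
        refine Finset.sum_congr rfl fun i _ => ?_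
        simp only [ha]
        push_cast
        ring
    _ = 2 * N := by rw [hdvd]; push_cast; field_simp; ring
end
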